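/- Let A be an additive category, let X be an object of A, and let Γ = End_A(X) be its endomorphism ring. The functor Hom_A(X,−) : A → Mod Γ (sending an object Y to the right Γ-module Hom_A(X,Y), with Γ acting by precomposition) restricts to a fully faithful functor from add X to the category of finitely generated projective right Γ-modules. If moreover A has split idempotents, then this restricted functor is an equivalence of categories between add X and the category of finitely generated projective right Γ-modules. -/

import Mathlib

open CategoryTheory CategoryTheory.Limits ZeroObject

attribute [local instance] CategoryTheory.Limits.hasBinaryBiproducts_of_finite_biproducts

universe v u

/-- `Y` belongs to `add X` if `Y` is a direct summand of a finite direct sum of copies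
of `X`. -/
def InAdd {A : Type u} [Category.{v} A] [Preadditive A] [HasFiniteBiproducts A]
    (X Y : A) : Prop :=
  ∃ (n : ℕ) (Z : A), Nonempty ((Y ⊞ Z) ≅ ⨁ (fun _ : Fin n => X))

/-- The left `End X`-module structure on `unop X ⟶ Y`, `r • f = r.unop ≫ f`, as in the older
Mathlib (`CategoryTheory.Preadditive.moduleEndLeft` for `X : Cᵒᵖ`). -/
instance moduleEndLeftOld {C : Type u} [Category.{v} C] [Preadditive C] {X : Cᵒᵖ} {Y : C} :
    Module (End X) (Opposite.unop X ⟶ Y) where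
  smul r f := r.unop ≫ f
  one_smul _ := Category.id_comp _
  mul_smul _ _ _ := Category.assoc _ _ _
  smul_add _ _ _ := Preadditive.comp_add _ _ _ _ _ _
  smul_zero _ := Limits.comp_zero
  add_smul _ _ _ := Preadditive.add_comp _ _ _ _ _ _
  zero_smul _ := Limits.zero_comp

/-- The functor `preadditiveCoyonedaObj` of the older Mathlib. -/
def preadditiveCoyonedaObjOld {C : Type u} [Category.{v} C] [Preadditive C] (Y : Cᵒᵖ) :
    C ⥤ ModuleCat.{v} (End Y) where
  obj X := ModuleCat.of _ (Opposite.unop Y ⟶ X)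
  map f := ModuleCat.ofHom
    { toFun := fun g => g ≫ f
      map_add' := fun _ _ => Preadditive.add_comp _ _ _ _ _ _
      map_smul' := fun _ _ => Category.assoc _ _ _ }

section Aux

variable {A : Type u} [Category.{v} A] [Preadditive A] [HasFiniteBiproducts A]

/-- From membership in `add X`, extract a retraction datum. -/
theorem InAdd.retract {X Y : A} (h : InAdd X Y) :
    ∃ (n : ℕ) (i : Y ⟶ ⨁ (fun _ : Fin n => X)) (p : (⨁ (fun _ : Fin n => X)) ⟶ Y),
      i ≫ p = 𝟙 Y := by
  obtain ⟨n, Z, ⟨φ⟩⟩ := h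
  exact ⟨n, biprod.inl ≫ φ.hom, φ.inv ≫ biprod.fst, by simp⟩

/-- Decomposition of a morphism into a finite biproduct of copies of `X` into its
components. -/
theorem aux_expand {X : A} {n : ℕ} (h : X ⟶ ⨁ (fun _ : Fin n => X)) :
    h = ∑ k, (h ≫ biproduct.π (fun _ : Fin n => X) k) ≫ biproduct.ι (fun _ : Fin n => X) k := by
  calc h = h ≫ ∑ k, biproduct.π (fun _ : Fin n => X) k ≫ biproduct.ι (fun _ : Fin n => X) k := by
        rw [biproduct.total, Category.comp_id]
    _ = ∑ k, (h ≫ biproduct.π (fun _ : Fin n => X) k) ≫ biproduct.ι (fun _ : Fin n => X) k := by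
        rw [Preadditive.comp_sum]; simp [Category.assoc]

/-- The hom-module from `X` to a finite direct sum of `n` copies of `X` is the free
right `End X`-module of rank `n`. -/
noncomputable def auxE (X : A) (n : ℕ) :
    ((preadditiveCoyonedaObjOld (Opposite.op X)).obj (⨁ (fun _ : Fin n => X)))
      ≃ₗ[End (Opposite.op X)] (Fin n → End (Opposite.op X)) where
  toFun g := fun k => ((g : X ⟶ _) ≫ biproduct.π (fun _ : Fin n => X) k).op
  invFun c := ∑ k, (c k).unop ≫ biproduct.ι (fun _ : Fin n => X) k
  map_add' g h := by
    funext k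
    show (((g : X ⟶ _) + (h : X ⟶ _)) ≫ biproduct.π (fun _ : Fin n => X) k).op
      = (((g : X ⟶ _) ≫ biproduct.π (fun _ : Fin n => X) k).op
        + ((h : X ⟶ _) ≫ biproduct.π (fun _ : Fin n => X) k).op : End (Opposite.op X))
    exact congrArg Quiver.Hom.op (Preadditive.add_comp _ _ _ _ _ _)
  map_smul' r g := by
    funext k
    exact congrArg Quiver.Hom.op (Category.assoc r.unop (g : X ⟶ _) _)
  left_inv g := by
    show ∑ k, ((g : X ⟶ _) ≫ biproduct.π (fun _ : Fin n => X) k)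
        ≫ biproduct.ι (fun _ : Fin n => X) k = g
    exact (aux_expand (g : X ⟶ _)).symm
  right_inv c := by
    funext k
    apply Quiver.Hom.unop_inj
    show (∑ j, (c j).unop ≫ biproduct.ι (fun _ : Fin n => X) j)
        ≫ biproduct.π (fun _ : Fin n => X) k = (c k).unop
    rw [Preadditive.sum_comp, Finset.sum_eq_single k]
    · rw [Category.assoc, biproduct.ι_π_self, Category.comp_id]
    · intro b _ hb
      rw [Category.assoc, biproduct.ι_π_ne _ hb, Limits.comp_zero]
    · intro hk
      exact absurd (Finset.mem_univ k) hk

theorem aux_bij (X Y Y' : A) (h : InAdd X Y) :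
    Function.Bijective
      (fun f : Y ⟶ Y' => (preadditiveCoyonedaObjOld (Opposite.op X)).map f) := by
  obtain ⟨n, i, p, hip⟩ := h.retract
  constructor
  · intro f f' hff
    have hg : ∀ g : X ⟶ Y, g ≫ f = g ≫ f' := fun g => DFunLike.congr_fun (congrArg ModuleCat.Hom.hom hff) g
    have hp : p ≫ f = p ≫ f' := by
      apply biproduct.hom_ext'
      intro j
      rw [← Category.assoc, ← Category.assoc, hg]
    calc f = (i ≫ p) ≫ f := by rw [hip, Category.id_comp]
      _ = (i ≫ p) ≫ f' := by rw [Category.assoc, hp, ← Category.assoc]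
      _ = f' := by rw [hip, Category.id_comp]
  · intro φ
    refine ⟨i ≫ biproduct.desc (fun k =>
      (φ (biproduct.ι (fun _ : Fin n => X) k ≫ p) : X ⟶ Y')), ?_⟩
    have hφ : ∀ (r : X ⟶ X) (x : X ⟶ Y), r ≫ (φ x : X ⟶ Y') = (φ (r ≫ x) : X ⟶ Y') :=
      fun r x => (LinearMap.map_smul φ.hom (show End (Opposite.op X) from r.op) x).symm
    apply ModuleCat.hom_ext
    apply LinearMap.ext
    intro (g₀ : X ⟶ Y)
    have hsum : (∑ k, (((g₀ : X ⟶ Y) ≫ i) ≫ biproduct.π (fun _ : Fin n => X) k)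
        ≫ (biproduct.ι (fun _ : Fin n => X) k ≫ p) : X ⟶ Y)
        = ((g₀ : X ⟶ Y) ≫ i) ≫ p := by
      calc (∑ k, (((g₀ : X ⟶ Y) ≫ i) ≫ biproduct.π (fun _ : Fin n => X) k)
            ≫ (biproduct.ι (fun _ : Fin n => X) k ≫ p) : X ⟶ Y)
          = (∑ k, (((g₀ : X ⟶ Y) ≫ i) ≫ biproduct.π (fun _ : Fin n => X) k)
            ≫ biproduct.ι (fun _ : Fin n => X) k) ≫ p := by
            rw [Preadditive.sum_comp]; simp [Category.assoc]
        _ = ((g₀ : X ⟶ Y) ≫ i) ≫ p := by rw [← aux_expand]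
    show (g₀ : X ⟶ Y) ≫ (i ≫ biproduct.desc (fun k =>
      (φ (biproduct.ι (fun _ : Fin n => X) k ≫ p) : X ⟶ Y'))) = φ g₀
    calc (g₀ : X ⟶ Y) ≫ (i ≫ biproduct.desc (fun k =>
          (φ (biproduct.ι (fun _ : Fin n => X) k ≫ p) : X ⟶ Y')))
        = ((g₀ : X ⟶ Y) ≫ i) ≫ biproduct.desc (fun k =>
          (φ (biproduct.ι (fun _ : Fin n => X) k ≫ p) : X ⟶ Y')) :=
          (Category.assoc _ _ _).symm
      _ = (∑ k, (((g₀ : X ⟶ Y) ≫ i) ≫ biproduct.π (fun _ : Fin n => X) k)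
            ≫ biproduct.ι (fun _ : Fin n => X) k) ≫ biproduct.desc (fun k =>
          (φ (biproduct.ι (fun _ : Fin n => X) k ≫ p) : X ⟶ Y')) := by
          rw [← aux_expand]
      _ = ∑ k, ((((g₀ : X ⟶ Y) ≫ i) ≫ biproduct.π (fun _ : Fin n => X) k)
            ≫ biproduct.ι (fun _ : Fin n => X) k) ≫ biproduct.desc (fun k =>
          (φ (biproduct.ι (fun _ : Fin n => X) k ≫ p) : X ⟶ Y')) :=
          Preadditive.sum_comp _ _ _
      _ = ∑ k, (((g₀ : X ⟶ Y) ≫ i) ≫ biproduct.π (fun _ : Fin n => X) k)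
            ≫ (φ (biproduct.ι (fun _ : Fin n => X) k ≫ p) : X ⟶ Y') := by
          refine Finset.sum_congr rfl fun k _ => ?_
          erw [Category.assoc, biproduct.ι_desc]
      _ = ∑ k, (id (φ ((((g₀ : X ⟶ Y) ≫ i) ≫ biproduct.π (fun _ : Fin n => X) k)
            ≫ (biproduct.ι (fun _ : Fin n => X) k ≫ p))) : X ⟶ Y') := by
          refine Finset.sum_congr rfl fun k _ => ?_
          exact hφ _ _
      _ = (id (φ (∑ k, (((g₀ : X ⟶ Y) ≫ i) ≫ biproduct.π (fun _ : Fin n => X) k)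
            ≫ (biproduct.ι (fun _ : Fin n => X) k ≫ p))) : X ⟶ Y') :=
          (map_sum φ.hom _ _).symm
      _ = (id (φ (((g₀ : X ⟶ Y) ≫ i) ≫ p)) : X ⟶ Y') :=
          congrArg (fun z : X ⟶ Y => (φ z : X ⟶ Y')) hsum
      _ = (id (φ g₀) : X ⟶ Y') := by rw [Category.assoc, hip, Category.comp_id]

theorem aux_finproj (X Y : A) (h : InAdd X Y) :
    Module.Finite (End (Opposite.op X))
      ((preadditiveCoyonedaObjOld (Opposite.op X)).obj Y) ∧
    Module.Projective (End (Opposite.op X))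
      ((preadditiveCoyonedaObjOld (Opposite.op X)).obj Y) := by
  obtain ⟨n, i, p, hip⟩ := h.retract
  haveI h1 : Module.Finite (End (Opposite.op X))
      ((preadditiveCoyonedaObjOld (Opposite.op X)).obj (⨁ (fun _ : Fin n => X))) :=
    Module.Finite.equiv (auxE X n).symm
  haveI h2 : Module.Projective (End (Opposite.op X))
      ((preadditiveCoyonedaObjOld (Opposite.op X)).obj (⨁ (fun _ : Fin n => X))) :=
    Module.Projective.of_equiv (auxE X n).symm
  constructor
  · refine Module.Finite.of_surjective
      ((preadditiveCoyonedaObjOld (Opposite.op X)).map p).hom (fun (g : X ⟶ Y) => ⟨(g : X ⟶ Y) ≫ i, ?_⟩)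
    show ((g : X ⟶ Y) ≫ i) ≫ p = g
    rw [Category.assoc, hip, Category.comp_id]
  · refine Module.Projective.of_split
      ((preadditiveCoyonedaObjOld (Opposite.op X)).map i).hom
      ((preadditiveCoyonedaObjOld (Opposite.op X)).map p).hom ?_
    apply LinearMap.ext
    intro (g : X ⟶ Y)
    show ((g : X ⟶ Y) ≫ i) ≫ p = g
    rw [Category.assoc, hip, Category.comp_id]

end Aux

theorem addX_equiv_fg_projective_modules {A : Type u} [Category.{v} A] [Preadditive A]
    [HasFiniteBiproducts A] (X : A) :
    (∀ Y : A, InAdd X Y →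
      Module.Finite (End (Opposite.op X))
        ((preadditiveCoyonedaObjOld (Opposite.op X)).obj Y) ∧
      Module.Projective (End (Opposite.op X))
        ((preadditiveCoyonedaObjOld (Opposite.op X)).obj Y)) ∧
    (∀ (Y Y' : A), InAdd X Y → InAdd X Y' →
      Function.Bijective
        (fun f : Y ⟶ Y' => (preadditiveCoyonedaObjOld (Opposite.op X)).map f)) ∧
    (IsIdempotentComplete A →
      ∀ M : ModuleCat.{v} (End (Opposite.op X)),
        Module.Finite (End (Opposite.op X)) M → Module.Projective (End (Opposite.op X)) M →
        ∃ Y : A, InAdd X Y ∧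
          Nonempty ((preadditiveCoyonedaObjOld (Opposite.op X)).obj Y ≅ M)) := by
  refine ⟨fun Y h => aux_finproj X Y h, fun Y Y' h _ => aux_bij X Y Y' h, ?_⟩
  intro hA M hMfin hMproj
  haveI := hMfin
  haveI := hMproj
  obtain ⟨n, q, hq⟩ := Module.Finite.exists_fin' (End (Opposite.op X)) M
  obtain ⟨s, hs⟩ := Module.projective_lifting_property q LinearMap.id hq
  have hqs : ∀ m : M, q (s m) = m := fun m => DFunLike.congr_fun hs m
  set W := ⨁ (fun _ : Fin n => X) with hW
  have hInW : InAdd X W :=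
    ⟨n, 0, ⟨(biprod.braiding W 0).trans (isoZeroBiprod (isZero_zero A)).symm⟩⟩
  set E := auxE X n with hE
  obtain ⟨ε, hε⟩ := (aux_bij X W W hInW).2
    (ModuleCat.ofHom (X := ((preadditiveCoyonedaObjOld (Opposite.op X)).obj W : Type v))
      (Y := ((preadditiveCoyonedaObjOld (Opposite.op X)).obj W : Type v)) (E.symm.toLinearMap ∘ₗ s ∘ₗ q ∘ₗ E.toLinearMap) :
      (preadditiveCoyonedaObjOld (Opposite.op X)).obj W ⟶
        (preadditiveCoyonedaObjOld (Opposite.op X)).obj W)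
  have hεg : ∀ g : X ⟶ W, g ≫ ε = E.symm (s (q (E g))) :=
    fun g => DFunLike.congr_fun (congrArg ModuleCat.Hom.hom hε) g
  have hidem : ε ≫ ε = ε := by
    apply (aux_bij X W W hInW).1
    apply ModuleCat.hom_ext
    apply LinearMap.ext
    intro (g : X ⟶ W)
    show (g : X ⟶ W) ≫ (ε ≫ ε) = (g : X ⟶ W) ≫ ε
    rw [← Category.assoc, hεg ((g : X ⟶ W) ≫ ε), hεg (g : X ⟶ W),
      E.apply_symm_apply, hqs]
  obtain ⟨Y, iY, eY, hie, hei⟩ := hA.idempotents_split W ε hidem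
  have hidem2 : (𝟙 W - ε) ≫ (𝟙 W - ε) = 𝟙 W - ε := by
    simp [Preadditive.sub_comp, Preadditive.comp_sub, hidem]
  obtain ⟨Z, iZ, eZ, hie2, hei2⟩ := hA.idempotents_split W (𝟙 W - ε) hidem2
  have hYε : iY ≫ ε = iY := by rw [← hei, ← Category.assoc, hie, Category.id_comp]
  have hεY : ε ≫ eY = eY := by rw [← hei, Category.assoc, hie, Category.comp_id]
  have hZ1 : (𝟙 W - ε) ≫ eZ = eZ := by
    rw [← hei2, Category.assoc, hie2, Category.comp_id]
  have hZ2 : iZ ≫ (𝟙 W - ε) = iZ := by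
    rw [← hei2, ← Category.assoc, hie2, Category.id_comp]
  have hYZ : iY ≫ eZ = 0 := by
    have h0 : iY ≫ (𝟙 W - ε) = 0 := by simp [Preadditive.comp_sub, hYε]
    rw [← hZ1, ← Category.assoc, h0, Limits.zero_comp]
  have hZY : iZ ≫ eY = 0 := by
    have h0 : (𝟙 W - ε) ≫ eY = 0 := by simp [Preadditive.sub_comp, hεY]
    rw [← hZ2, Category.assoc, h0, Limits.comp_zero]
  have hiso : Nonempty ((Y ⊞ Z) ≅ W) := by
    refine ⟨⟨biprod.desc iY iZ, biprod.lift eY eZ, ?_, ?_⟩⟩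
    · apply biprod.hom_ext' <;> apply biprod.hom_ext <;>
        simp [hie, hie2, hYZ, hZY]
    · rw [biprod.lift_desc, hei, hei2]
      abel
  refine ⟨Y, ⟨n, Z, hiso⟩, ⟨LinearEquiv.toModuleIso ?_⟩⟩
  refine LinearEquiv.ofLinear
    (q ∘ₗ E.toLinearMap ∘ₗ ((preadditiveCoyonedaObjOld (Opposite.op X)).map iY :
      (preadditiveCoyonedaObjOld (Opposite.op X)).obj Y ⟶
        (preadditiveCoyonedaObjOld (Opposite.op X)).obj W).hom)
    ((((preadditiveCoyonedaObjOld (Opposite.op X)).map eY :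
      (preadditiveCoyonedaObjOld (Opposite.op X)).obj W ⟶
        (preadditiveCoyonedaObjOld (Opposite.op X)).obj Y).hom : _ →ₗ[End (Opposite.op X)] _)
      ∘ₗ E.symm.toLinearMap ∘ₗ s) ?_ ?_
  · apply LinearMap.ext
    intro m
    show q (E (((E.symm (s m) : X ⟶ W) ≫ eY) ≫ iY)) = m
    erw [Category.assoc, hei, hεg (E.symm (s m) : X ⟶ W), E.apply_symm_apply, hqs,
      E.apply_symm_apply, hqs]
  · apply LinearMap.ext (M := ((preadditiveCoyonedaObjOld (Opposite.op X)).obj Y : Type v))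
      (M₃ := ((preadditiveCoyonedaObjOld (Opposite.op X)).obj Y : Type v))
    intro (g : X ⟶ Y)
    show (E.symm (s (q (E ((g : X ⟶ Y) ≫ iY)))) : X ⟶ W) ≫ eY = g
    rw [← hεg ((g : X ⟶ Y) ≫ iY), Category.assoc, hεY, Category.assoc, hie,
      Category.comp_id]
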